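/- Let (X,d) be a metric space, R a relation on X, T : X → X, and G ∈ 𝒢. If T is (d,R;G,(ψ,φ))-contractive for some pair (ψ,φ) of weak generalized altering functions in F(ℝ₊), then T is Meir-Keeler (d,R;G)-contractive; that is, (i) x R̃ y implies d(Tx,Ty) < G(x,y), and (ii) for every ε > 0 there exists δ > 0 such that x R̃ y and ε < G(x,y) < ε+δ imply d(Tx,Ty) ≤ ε. -/

import Mathlib

open Filter Topology

namespace Paper

variable {X : Type*} [MetricSpace X]

/-- `A₁(x,y) = d(x,y)`. -/
noncomputable def A1 (T : X → X) (x y : X) : ℝ := dist x y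

/-- `A₂(x,y) = (1/2)[d(x,Tx) + d(y,Ty)]`. -/
noncomputable def A2 (T : X → X) (x y : X) : ℝ := (dist x (T x) + dist y (T y)) / 2

/-- `A₃(x,y) = max{d(x,Tx), d(y,Ty)}`. -/
noncomputable def A3 (T : X → X) (x y : X) : ℝ := max (dist x (T x)) (dist y (T y))

/-- `A₄(x,y) = (1/2)[d(x,Ty) + d(Tx,y)]`. -/
noncomputable def A4 (T : X → X) (x y : X) : ℝ := (dist x (T y) + dist (T x) y) / 2

/-- `B₁(x,y) = diam{x, Tx, y, Ty}`. -/
noncomputable def B1 (T : X → X) (x y : X) : ℝ := Metric.diam ({x, T x, y, T y} : Set X)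

noncomputable def B2 (T : X → X) (x y : X) : ℝ := max (A1 T x y) (A2 T x y)
noncomputable def B3 (T : X → X) (x y : X) : ℝ := max (A1 T x y) (A3 T x y)
noncomputable def B4 (T : X → X) (x y : X) : ℝ := max (A1 T x y) (A4 T x y)
noncomputable def C1 (T : X → X) (x y : X) : ℝ := max (A1 T x y) (max (A2 T x y) (A4 T x y))
noncomputable def C2 (T : X → X) (x y : X) : ℝ := max (A1 T x y) (max (A3 T x y) (A4 T x y))

/-- The class `𝒢 = {A₁, B₂, B₃, B₄, C₁, C₂}`. -/
noncomputable def calG (T : X → X) : Set (X → X → ℝ) :=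
  {A1 T, B2 T, B3 T, B4 T, C1 T, C2 T}

/-- The class `𝒢₁ = {A₁, B₂, B₄, C₁}`. -/
noncomputable def calG1 (T : X → X) : Set (X → X → ℝ) :=
  {A1 T, B2 T, B4 T, C1 T}

/-- `T` is strictly `(d,R;G)`-nonexpansive: `x R̃ y` implies `d(Tx,Ty) < G(x,y)`. -/
def StrictlyNonexpansive (R : X → X → Prop) (T : X → X) (G : X → X → ℝ) : Prop :=
  ∀ x y, R x y → x ≠ y → dist (T x) (T y) < G x y

/-- `T` is Meir-Keeler `(d,R;G)`-contractive. -/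
def MeirKeelerContractive (R : X → X → Prop) (T : X → X) (G : X → X → ℝ) : Prop :=
  StrictlyNonexpansive R T G ∧
  ∀ ε : ℝ, 0 < ε → ∃ δ : ℝ, 0 < δ ∧
    ∀ x y, R x y → x ≠ y → ε < G x y → G x y < ε + δ → dist (T x) (T y) ≤ ε

/-- `φ ∈ F(re)(ℝ₊)`: `φ : ℝ₊ → ℝ₊` with `φ(0) = 0` and `φ(t) < t` for `t > 0`. -/
def Regressive (φ : ℝ → ℝ) : Prop :=
  φ 0 = 0 ∧ (∀ t, 0 ≤ t → 0 ≤ φ t) ∧ (∀ t, 0 < t → φ t < t)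

/-- `φ` is Meir-Keeler admissible. -/
def MKAdmissible (φ : ℝ → ℝ) : Prop :=
  ∀ γ : ℝ, 0 < γ → ∃ β : ℝ, 0 < β ∧ β < γ ∧ ∀ t, γ ≤ t → t < γ + β → φ t ≤ γ

/-- `T` is `(d,R;G,φ)`-contractive. -/
def PhiContractive (R : X → X → Prop) (T : X → X) (G : X → X → ℝ) (φ : ℝ → ℝ) : Prop :=
  ∀ x y, R x y → x ≠ y → dist (T x) (T y) ≤ φ (G x y)

/-- `(ψ,φ)` is a pair of weak generalized altering functions in `F(ℝ₊)`. -/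
def WeakAlteringPair (ψ φ : ℝ → ℝ) : Prop :=
  (∀ s t, 0 ≤ s → s ≤ t → ψ s ≤ ψ t) ∧
  (∀ t, 0 ≤ t → 0 ≤ ψ t) ∧ (∀ t, 0 ≤ t → 0 ≤ φ t) ∧
  φ 0 = 0 ∧
  (∀ ε : ℝ, 0 < ε → ψ ε - Function.leftLim ψ ε < φ ε) ∧
  (∀ ε : ℝ, 0 < ε → ∀ t : ℕ → ℝ,
    Tendsto t atTop (nhds ε) → (∀ᶠ n in atTop, ε < t n) →
    Function.rightLim ψ ε - ψ ε < Filter.limsup (fun n => φ (t n)) atTop)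

/-- `T` is `(d,R;G,(ψ,φ))`-contractive. -/
def PsiPhiContractive (R : X → X → Prop) (T : X → X) (G : X → X → ℝ) (ψ φ : ℝ → ℝ) : Prop :=
  ∀ x y, R x y → x ≠ y → ψ (dist (T x) (T y)) ≤ ψ (G x y) - φ (G x y)

/-- `(z_n)` is `R`-ascending. -/
def Ascending (R : X → X → Prop) (z : ℕ → X) : Prop := ∀ n, R (z n) (z (n + 1))

/-- `(z_n)` is `T`-orbital: a subsequence of `(Tⁿ x)` for some `x`. -/
def Orbital (T : X → X) (z : ℕ → X) : Prop :=
  ∃ x : X, ∃ i : ℕ → ℕ, Tendsto i atTop atTop ∧ ∀ n, z n = T^[i n] x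

/-- `X` is `(a-o,d)`-complete. -/
def AOComplete (R : X → X → Prop) (T : X → X) : Prop :=
  ∀ z : ℕ → X, Ascending R z → Orbital T z → CauchySeq z → ∃ l, Tendsto z atTop (nhds l)

/-- `T` is `(a-o,d)`-continuous. -/
def AOContinuous (R : X → X → Prop) (T : X → X) : Prop :=
  ∀ z : ℕ → X, ∀ l : X, Ascending R z → Orbital T z → Tendsto z atTop (nhds l) →
    Tendsto (fun n => T (z n)) atTop (nhds (T l))

/-- `R` is `(a-o,d)`-almost-selfclosed. -/
def AlmostSelfClosed (R : X → X → Prop) (T : X → X) : Prop :=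
  ∀ z : ℕ → X, ∀ l : X, Ascending R z → Orbital T z → Tendsto z atTop (nhds l) →
    ∃ i : ℕ → ℕ, Tendsto i atTop atTop ∧ ∀ n, R (z (i n)) l

/-- the spectrum `spec(x) = {i ≥ 1 : x R Tⁱx}`. -/
def spec (R : X → X → Prop) (T : X → X) (x : X) : Set ℕ := {i | 1 ≤ i ∧ R x (T^[i] x)}

/-- `R` is `k`-semi-recurrent at `x`. -/
def SemiRecurrentAt (R : X → X → Prop) (T : X → X) (x : X) (k : ℕ) : Prop :=
  ∀ n : ℕ, 1 ≤ n → ∃ q ∈ spec R T x, q ≤ n ∧ n < q + k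

/-- `x` is orbital admissible. -/
def OrbAdmissible (T : X → X) (x : X) : Prop :=
  ∀ i j : ℕ, i ≠ j → T^[i] x ≠ T^[j] x

/-- `R` is finitely semi-recurrent. -/
def FinSemiRecurrent (R : X → X → Prop) (T : X → X) : Prop :=
  ∀ x : X, R x (T x) → OrbAdmissible T x → ∃ k : ℕ, 1 ≤ k ∧ SemiRecurrentAt R T x k


lemma mono_ext {ψ : ℝ → ℝ} (h : ∀ s t, 0 ≤ s → s ≤ t → ψ s ≤ ψ t) :
    Monotone (fun t => ψ (max t 0)) := fun s t hst =>
  h _ _ (le_max_right _ _) (max_le_max hst le_rfl)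

lemma leftLim_le_self {ψ : ℝ → ℝ} (h : ∀ s t, 0 ≤ s → s ≤ t → ψ s ≤ ψ t)
    {g : ℝ} (hg : 0 < g) : Function.leftLim ψ g ≤ ψ g := by
  set ψ' := fun t => ψ (max t 0) with hψ'
  have hmono := mono_ext h
  have htd : Tendsto ψ (𝓝[<] g) (𝓝 (Function.leftLim ψ' g)) := by
    apply (hmono.tendsto_leftLim g).congr'
    filter_upwards [Ioo_mem_nhdsLT_of_mem (show g ∈ Set.Ioc (0:ℝ) g from ⟨hg, le_rfl⟩)] with t ht
    simp [hψ', max_eq_left ht.1.le]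
  have heq := leftLim_eq_of_tendsto (f := ψ)
    (h := nhdsLT_neBot g) htd
  rw [heq]
  have h2 : Function.leftLim ψ' g ≤ ψ' g := hmono.leftLim_le le_rfl
  simpa [hψ', max_eq_left hg.le] using h2

lemma tendsto_rightLim_aux {ψ : ℝ → ℝ} (h : ∀ s t, 0 ≤ s → s ≤ t → ψ s ≤ ψ t)
    {ε : ℝ} (hε : 0 ≤ ε) : Tendsto ψ (𝓝[>] ε) (𝓝 (Function.rightLim ψ ε)) := by
  set ψ' := fun t => ψ (max t 0) with hψ'
  have hmono := mono_ext h
  have htd : Tendsto ψ (𝓝[>] ε) (𝓝 (Function.rightLim ψ' ε)) := by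
    apply (hmono.tendsto_rightLim ε).congr'
    filter_upwards [self_mem_nhdsWithin] with t (ht : ε < t)
    simp [hψ', max_eq_left (hε.trans ht.le)]
  have heq := rightLim_eq_of_tendsto (f := ψ)
    (h := nhdsGT_neBot ε) htd
  rw [heq]; exact htd

/-- if `T` is `(d,R;G,(ψ,φ))`-contractive for a pair `(ψ,φ)` of weak
generalized altering functions, then `T` is Meir-Keeler `(d,R;G)`-contractive. -/
theorem meirKeeler_of_psiPhiContractive {X : Type*} [MetricSpace X]
    (R : X → X → Prop) (T : X → X) (G : X → X → ℝ) (hG : G ∈ calG T)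
    (ψ φ : ℝ → ℝ) (hpair : WeakAlteringPair ψ φ)
    (hcontr : PsiPhiContractive R T G ψ φ) :
    MeirKeelerContractive R T G := by
  obtain ⟨hψmono, hψpos, hφpos, hφ0, hleft, hright⟩ := hpair
  have hGe : ∀ x y : X, dist x y ≤ G x y := by
    simp only [calG, Set.mem_insert_iff, Set.mem_singleton_iff] at hG
    rcases hG with rfl | rfl | rfl | rfl | rfl | rfl <;>
      intro x y <;>
      simp only [A1, B2, B3, B4, C1, C2] <;>
      first | rfl | exact le_max_left _ _
  have hstrict : StrictlyNonexpansive R T G := by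
    intro x y hR hne
    have hgpos : 0 < G x y := lt_of_lt_of_le (dist_pos.2 hne) (hGe x y)
    have hc := hcontr x y hR hne
    have hφ := hleft (G x y) hgpos
    have hll := leftLim_le_self hψmono hgpos
    by_contra hcon
    push_neg at hcon
    have h5 : ψ (G x y) ≤ ψ (dist (T x) (T y)) := hψmono _ _ hgpos.le hcon
    linarith
  refine ⟨hstrict, ?_⟩
  intro ε hε
  by_contra hcon
  push_neg at hcon
  choose x y hR hne h1 h2 h3 using fun n : ℕ => hcon (1 / (n + 1)) (by positivity)
  set g : ℕ → ℝ := fun n => G (x n) (y n) with hgdef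
  have hgt : Tendsto g atTop (𝓝 ε) := by
    have hup : Tendsto (fun n : ℕ => ε + 1 / (n + 1 : ℝ)) atTop (𝓝 ε) := by
      have := tendsto_one_div_add_atTop_nhds_zero_nat (𝕜 := ℝ)
      simpa using tendsto_const_nhds.add this
    exact tendsto_of_tendsto_of_tendsto_of_le_of_le tendsto_const_nhds hup
      (fun n => (h1 n).le) (fun n => (h2 n).le)
  have key := hright ε hε g hgt (Eventually.of_forall h1)
  have hψg : Tendsto (fun n => ψ (g n)) atTop (𝓝 (Function.rightLim ψ ε)) :=
    (tendsto_rightLim_aux hψmono hε.le).comp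
      (tendsto_nhdsWithin_of_tendsto_nhds_of_eventually_within g hgt (Eventually.of_forall h1))
  have hub : ∀ n, φ (g n) ≤ ψ (g n) - ψ ε := by
    intro n
    have hc := hcontr (x n) (y n) (hR n) (hne n)
    have h5 : ψ ε ≤ ψ (dist (T (x n)) (T (y n))) := hψmono _ _ hε.le (h3 n).le
    linarith
  have hT : Tendsto (fun n => ψ (g n) - ψ ε) atTop (𝓝 (Function.rightLim ψ ε - ψ ε)) :=
    hψg.sub tendsto_const_nhds
  have hcob : IsCoboundedUnder (· ≤ ·) atTop (fun n => φ (g n)) := by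
    apply IsBoundedUnder.isCoboundedUnder_le (isBoundedUnder_of ⟨0, fun n => hφpos _ (le_trans hε.le (h1 n).le)⟩)
  have hbd : IsBoundedUnder (· ≤ ·) atTop (fun n => ψ (g n) - ψ ε) := hT.isBoundedUnder_le
  have hls : limsup (fun n => φ (g n)) atTop ≤ Function.rightLim ψ ε - ψ ε := by
    have := limsup_le_limsup (Eventually.of_forall hub) hcob hbd
    rwa [hT.limsup_eq] at this
  linarith


end Paper
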